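/- Optimal greedy user selection (Lemma 1): in the large-bandwidth feasibility problem P5 (find S = ∪_{m=1}^D S_m with S_m ⊆ K_m, Σ_m |S_m| = n, and Σ_{d=1}^m f_d(n_d) ≤ τ̃_k for all k ∈ S_m), let F_1 = {k ∈ K_1 : f_1(n) ≤ τ̃_k} with |F_1| < n. If no solution exists with |S_1| = n† for some n† ≤ |F_1|, then no solution exists with 0 ≤ |S_1| < n†. -/
import Mathlib


open Finset

/-- Optimal greedy user selection (Lemma 1). In the large-bandwidth feasibility problem
P5 — find `S ⊆ K` with `|S| = n` such that `Σ_{d=1}^{d_k} f_d(n_d) ≤ τ̃_k` for all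
`k ∈ S`, where `n_d = Σ_{k∈S} 𝟙(d_k ≥ d)` — let `F₁ = {k ∈ K₁ : f_1(n) ≤ τ̃_k}` with
`|F₁| < n`. If no solution exists with `|S₁| = n†` for some `n† ≤ |F₁|`, then no
solution exists with `0 ≤ |S₁| < n†`, where `S₁ = {k ∈ S : d_k = 1}`. -/
theorem optimal_greedy_user_selection {ι : Type*} (K : Finset ι) (D : ℕ) (dk : ι → ℕ)
    (hdk : ∀ k ∈ K, 1 ≤ dk k ∧ dk k ≤ D) (τ : ι → ℝ) (f : ℕ → ℕ → ℝ)
    (hf0 : ∀ d m, 0 ≤ f d m) (hf : ∀ d, Monotone (f d)) (n : ℕ)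
    (F₁ : Finset ι) (hF₁ : F₁ = K.filter (fun k => dk k = 1 ∧ f 1 n ≤ τ k))
    (hF₁lt : F₁.card < n) (ndag : ℕ) (hdag : ndag ≤ F₁.card)
    (hno : ¬ ∃ S ⊆ K, S.card = n ∧
        (∀ k ∈ S, (∑ d ∈ Finset.Icc 1 (dk k),
            f d (S.filter (fun j => d ≤ dk j)).card) ≤ τ k) ∧
        (S.filter (fun k => dk k = 1)).card = ndag) :
    ¬ ∃ S ⊆ K, S.card = n ∧
        (∀ k ∈ S, (∑ d ∈ Finset.Icc 1 (dk k),
            f d (S.filter (fun j => d ≤ dk j)).card) ≤ τ k) ∧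
        (S.filter (fun k => dk k = 1)).card < ndag := by
  classical
  rintro ⟨S, hSK, hScard, hfeas, hlt⟩
  apply hno
  have key : ∀ t : ℕ, ∀ S : Finset ι, S ⊆ K → S.card = n →
      (∀ k ∈ S, (∑ d ∈ Finset.Icc 1 (dk k),
          f d (S.filter (fun j => d ≤ dk j)).card) ≤ τ k) →
      (S.filter (fun k => dk k = 1)).card + t = ndag →
      ∃ S ⊆ K, S.card = n ∧
        (∀ k ∈ S, (∑ d ∈ Finset.Icc 1 (dk k),
            f d (S.filter (fun j => d ≤ dk j)).card) ≤ τ k) ∧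
        (S.filter (fun k => dk k = 1)).card = ndag := by
    intro t
    induction t with
    | zero => intro S hSK hScard hfeas hc; exact ⟨S, hSK, hScard, hfeas, by omega⟩
    | succ t ih =>
      intro S hSK hScard hfeas hc
      set S₁ := S.filter (fun k => dk k = 1) with hS₁
      have hfil1 : S.filter (fun j => 1 ≤ dk j) = S :=
        filter_eq_self.mpr (fun x hx => (hdk x (hSK hx)).1)
      -- S₁ ⊆ F₁
      have hS₁F : S₁ ⊆ F₁ := by
        intro x hx
        rw [hS₁, mem_filter] at hx
        obtain ⟨hxS, hdx⟩ := hx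
        have := hfeas x hxS
        rw [hdx] at this
        simp only [Finset.Icc_self, Finset.sum_singleton, hfil1, hScard] at this
        rw [hF₁, mem_filter]
        exact ⟨hSK hxS, hdx, this⟩
      -- find j ∈ F₁ \ S
      have hS₁card : S₁.card < F₁.card := by omega
      have hjex : (F₁ \ S₁).Nonempty := by
        rw [sdiff_nonempty]
        intro h
        exact absurd (card_le_card h) (by omega)
      obtain ⟨j, hj⟩ := hjex
      rw [mem_sdiff] at hj
      obtain ⟨hjF, hjS₁⟩ := hj
      rw [hF₁, mem_filter] at hjF
      obtain ⟨hjK, hdj, hτj⟩ := hjF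
      have hjS : j ∉ S := fun h => hjS₁ (mem_filter.mpr ⟨h, hdj⟩)
      -- find k ∈ S with dk k ≠ 1
      have hkex : (S \ S₁).Nonempty := by
        rw [sdiff_nonempty]
        intro h
        have := card_le_card h
        omega
      obtain ⟨k, hk⟩ := hkex
      rw [mem_sdiff] at hk
      obtain ⟨hkS, hkS₁⟩ := hk
      have hdkk : dk k ≠ 1 := fun h => hkS₁ (mem_filter.mpr ⟨hkS, h⟩)
      -- the swap
      set S' := insert j (S.erase k) with hS'
      have hjE : j ∉ S.erase k := fun h => hjS (mem_of_mem_erase h)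
      have hS'K : S' ⊆ K :=
        insert_subset hjK ((erase_subset k S).trans hSK)
      have hnpos : 1 ≤ n := by
        rw [← hScard]; exact card_pos.mpr ⟨k, hkS⟩
      have hS'card : S'.card = n := by
        rw [hS', card_insert_of_notMem hjE, card_erase_of_mem hkS, hScard]
        omega
      have hS'fil : (S'.filter (fun k => dk k = 1)).card = S₁.card + 1 := by
        rw [hS', filter_insert, if_pos hdj, filter_erase,
          erase_eq_of_notMem (by rw [hS₁] at hkS₁; exact hkS₁),
          ← hS₁, card_insert_of_notMem hjS₁]
      have hfil1' : S'.filter (fun j => 1 ≤ dk j) = S' :=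
        filter_eq_self.mpr (fun x hx => (hdk x (hS'K hx)).1)
      -- counts don't increase
      have hmono : ∀ d, 1 ≤ d →
          (S'.filter (fun x => d ≤ dk x)).card ≤ (S.filter (fun x => d ≤ dk x)).card := by
        intro d hd
        rcases eq_or_lt_of_le hd with h1 | h2
        · rw [← h1, hfil1', hfil1, hS'card, hScard]
        · apply card_le_card
          intro x hx
          rw [mem_filter] at hx ⊢
          obtain ⟨hxS', hdx⟩ := hx
          rw [hS', mem_insert] at hxS'
          rcases hxS' with rfl | hxE
          · omega
          · exact ⟨mem_of_mem_erase hxE, hdx⟩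
      have hfeas' : ∀ i ∈ S', (∑ d ∈ Finset.Icc 1 (dk i),
          f d (S'.filter (fun j => d ≤ dk j)).card) ≤ τ i := by
        intro i hi
        rw [hS', mem_insert] at hi
        rcases hi with rfl | hiE
        · rw [hdj]
          simp only [Finset.Icc_self, Finset.sum_singleton, hfil1', hS'card]
          exact hτj
        · have hiS : i ∈ S := mem_of_mem_erase hiE
          refine le_trans (Finset.sum_le_sum (fun d hd => ?_)) (hfeas i hiS)
          exact hf d (hmono d (mem_Icc.mp hd).1)
      exact ih S' hS'K hS'card hfeas' (by omega)
  exact key (ndag - (S.filter (fun k => dk k = 1)).card) S hSK hScard hfeas (by omega)
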